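/- For every integer n ≥ 3 there exists a packing of n horospheres with 3n − 6 tangencies: there exist p : Fin n → ℝ² and R : Fin n → ℝ with R i > 0 for all i, the pairs (p i, R i) pairwise distinct, ‖p i − p j‖² ≥ 4 (R i) (R j) for all i ≠ j, and the number of unordered pairs {i, j}, i ≠ j, with ‖p i − p j‖² = 4 (R i) (R j) equal to 3n − 6. -/

import Mathlib

namespace ApolloPack

/-! Eisenstein integers as pairs `(a, b)` representing `a + b ω`, where
`ω = e^{iπ/3}` satisfies `ω² = ω - 1`. -/

abbrev E := ℤ × ℤ

def emul (x y : E) : E := (x.1 * y.1 - x.2 * y.2, x.1 * y.2 + x.2 * y.1 + x.2 * y.2)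

def enorm (x : E) : ℤ := x.1 ^ 2 + x.1 * x.2 + x.2 ^ 2

/-- `ω²` as an Eisenstein integer. -/
def w2 : E := (-1, 1)

lemma enorm_emul (x y : E) : enorm (emul x y) = enorm x * enorm y := by
  simp only [enorm, emul]; ring

lemma enorm_nonneg (x : E) : 0 ≤ enorm x := by
  simp only [enorm]; nlinarith [sq_nonneg (2*x.1 + x.2), sq_nonneg x.2]

lemma enorm_neg (x : E) : enorm (-x) = enorm x := by
  simp only [enorm, Prod.fst_neg, Prod.snd_neg]; ring

lemma emul_one (x : E) : emul x (1, 0) = x := by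
  simp [emul]

/-- The normalized determinant sequence `u`. -/
def u : ℕ → E
  | 0 => (0, 0)
  | 1 => (1, 0)
  | (j+2) => u (j+1) + emul w2 (u j)

/-- Numerators of the horoball chain. -/
def vz : ℕ → E
  | 0 => (1, 0)
  | 1 => (0, 0)
  | (j+2) => vz (j+1) + emul w2 (vz j)

/-- Denominators of the horoball chain. -/
def vw : ℕ → E
  | 0 => (0, 0)
  | 1 => (1, 0)
  | (j+2) => vw (j+1) + emul w2 (vw j)

def det (j k : ℕ) : E := emul (vz j) (vw k) - emul (vz k) (vw j)

lemma det_rec (j k : ℕ) : det (j+2) k = det (j+1) k + emul w2 (det j k) := by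
  simp only [det, vz, vw]
  apply Prod.ext <;> simp [emul, Prod.ext_iff] <;> ring

lemma det_self (k : ℕ) : det k k = 0 := by
  simp [det]

def e (k : ℕ) : E := det (k+1) k

lemma e_rec (k : ℕ) : e (k+1) = emul w2 (- e k) := by
  simp only [e]
  have h2 : det (k+2) (k+1) = det (k+1) (k+1) + emul w2 (det k (k+1)) := det_rec k (k+1)
  rw [h2, det_self, zero_add]
  congr 1
  simp only [det]
  apply Prod.ext <;> simp [emul] <;> ring

lemma enorm_e (k : ℕ) : enorm (e k) = 1 := by
  induction k with
  | zero => simp [e, det, vz, vw, emul, enorm]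
  | succ k ih =>
      rw [e_rec, enorm_emul, enorm_neg, ih]
      simp [w2, enorm]

lemma det_shift (k : ℕ) : ∀ j, det (k + j) k = emul (e k) (u j) := by
  have key : ∀ j, det (k + j) k = emul (e k) (u j) ∧ det (k + (j+1)) k = emul (e k) (u (j+1)) := by
    intro j
    induction j with
    | zero =>
        constructor
        · simp [det_self, u, emul]; rfl
        · show det (k+1) k = emul (e k) (u 1)
          simp only [u]
          rw [emul_one]
          rfl
    | succ j ih =>
        refine ⟨ih.2, ?_⟩
        have hidx : k + (j + 2) = (k + j) + 2 := by omega
        have hidx2 : (k + j) + 1 = k + (j + 1) := by omega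
        rw [hidx, det_rec, hidx2, ih.1, ih.2]
        show _ = emul (e k) (u (j+2))
        simp only [u]
        apply Prod.ext <;> simp [emul, Prod.ext_iff] <;> ring
  exact fun j => (key j).1

/-- The integer norm sequence. -/
def N (j : ℕ) : ℤ := enorm (u j)

lemma N_rec (j : ℕ) : N (j+4) = N (j+3) + N (j+2) + N (j+1) - N j := by
  simp only [N, u, enorm, emul, w2, Prod.fst_add, Prod.snd_add]
  ring

lemma N_zero : N 0 = 0 := by simp [N, u, enorm]
lemma N_one : N 1 = 1 := by simp [N, u, enorm]
lemma N_two : N 2 = 1 := by simp [N, u, enorm, emul, w2]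
lemma N_three : N 3 = 1 := by simp [N, u, enorm, emul, w2]
lemma N_four : N 4 = 3 := by simp [N, u, enorm, emul, w2]

lemma N_mono (j : ℕ) : N j ≤ N (j+1) := by
  have key : ∀ j, N j ≤ N (j+1) ∧ N (j+1) ≤ N (j+2) ∧ N (j+2) ≤ N (j+3) := by
    intro j
    induction j with
    | zero =>
        refine ⟨?_, ?_, ?_⟩ <;> simp [N_zero, N_one, N_two, N_three]
    | succ j ih =>
        refine ⟨ih.2.1, ih.2.2, ?_⟩
        show N (j+3) ≤ N (j+4)
        have h := N_rec j
        have h1 := ih.1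
        have h2' : 0 ≤ N (j+2) := enorm_nonneg (u (j+2))
        omega
  exact (key j).1

lemma N_ge_one {j : ℕ} (h : 1 ≤ j) : 1 ≤ N j := by
  induction j, h using Nat.le_induction with
  | base => simp [N_one]
  | succ j hj ih => exact le_trans ih (N_mono j)

lemma N_ge_two {j : ℕ} (h : 4 ≤ j) : 2 ≤ N j := by
  induction j, h using Nat.le_induction with
  | base => simp [N_four]
  | succ j hj ih => exact le_trans ih (N_mono j)

lemma N_eq_one {j : ℕ} (h1 : 1 ≤ j) (h3 : j ≤ 3) : N j = 1 := by
  interval_cases j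
  · exact N_one
  · exact N_two
  · exact N_three

/-! The complex realization. -/

noncomputable def om : ℂ := Complex.I * (Real.sqrt 3 / 2) + 1/2

lemma om_re : om.re = 1/2 := by simp [om]
lemma om_im : om.im = Real.sqrt 3 / 2 := by simp [om]

lemma om_sq : om ^ 2 = om - 1 := by
  have h3 : Real.sqrt 3 ^ 2 = 3 := Real.sq_sqrt (by norm_num)
  apply Complex.ext
  · simp [pow_two, Complex.mul_re, om_re, om_im]
    nlinarith [h3]
  · simp [pow_two, Complex.mul_im, om_re, om_im]
    ring

noncomputable def toC (x : E) : ℂ := (x.1 : ℂ) + (x.2 : ℂ) * om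

lemma toC_sub (x y : E) : toC (x - y) = toC x - toC y := by
  simp only [toC, Prod.fst_sub, Prod.snd_sub]
  push_cast
  ring

lemma toC_emul (x y : E) : toC (emul x y) = toC x * toC y := by
  simp only [toC, emul]
  push_cast
  linear_combination (-(x.2 : ℂ) * (y.2 : ℂ)) * om_sq

lemma normSq_toC (x : E) : Complex.normSq (toC x) = (enorm x : ℝ) := by
  have h3 : Real.sqrt 3 ^ 2 = 3 := Real.sq_sqrt (by norm_num)
  simp only [toC, Complex.normSq_apply, Complex.add_re, Complex.add_im,
    Complex.mul_re, Complex.mul_im, Complex.intCast_re, Complex.intCast_im,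
    om_re, om_im, enorm]
  push_cast
  nlinarith [h3]

noncomputable def Zc (k : ℕ) : ℂ := toC (vz k)
noncomputable def Wc (k : ℕ) : ℂ := toC (vw k)

lemma det_zero (k : ℕ) : det k 0 = - vw k := by
  simp only [det]
  rw [show vw 0 = (0,0) from rfl, show vz 0 = (1,0) from rfl]
  apply Prod.ext <;> simp [emul]

lemma enorm_vw (k : ℕ) : enorm (vw k) = N k := by
  have h1 : det (0 + k) 0 = emul (e 0) (u k) := det_shift 0 k
  rw [Nat.zero_add] at h1
  have h2 : enorm (det k 0) = N k := by
    rw [h1, enorm_emul, enorm_e, one_mul]; rfl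
  calc enorm (vw k) = enorm (-(vw k)) := (enorm_neg _).symm
    _ = enorm (det k 0) := by rw [det_zero]
    _ = N k := h2

lemma enorm_det' (a b : ℕ) (h : a ≤ b) : enorm (det b a) = N (b - a) := by
  obtain ⟨d, rfl⟩ : ∃ d, b = a + d := ⟨b - a, by omega⟩
  rw [det_shift a d, enorm_emul, enorm_e, one_mul, Nat.add_sub_cancel_left]
  rfl

noncomputable def pt (k : ℕ) : ℂ := Zc k / Wc k
noncomputable def rad (k : ℕ) : ℝ := 1 / (2 * (N k : ℝ))

lemma N_posR {k : ℕ} (h : 1 ≤ k) : (0:ℝ) < (N k : ℝ) := by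
  exact_mod_cast lt_of_lt_of_le one_pos (N_ge_one h)

lemma normSq_Wc (k : ℕ) : Complex.normSq (Wc k) = (N k : ℝ) := by
  rw [Wc, normSq_toC, enorm_vw]

lemma Wc_ne {k : ℕ} (h : 1 ≤ k) : Wc k ≠ 0 :=
  Complex.normSq_pos.mp (by rw [normSq_Wc]; exact N_posR h)

lemma rad_pos {k : ℕ} (h : 1 ≤ k) : 0 < rad k := by
  have := N_posR h
  rw [rad]
  positivity

lemma key (a b : ℕ) (ha : 1 ≤ a) (hab : a < b) :
    Complex.normSq (pt a - pt b) = (N (b - a) : ℝ) / ((N a : ℝ) * (N b : ℝ)) := by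
  have hb : 1 ≤ b := by omega
  have hWa := Wc_ne ha
  have hWb := Wc_ne hb
  have hmul : (pt a - pt b) * (Wc a * Wc b) = - toC (det b a) := by
    simp only [pt, det, toC_sub, toC_emul]
    show (Zc a / Wc a - Zc b / Wc b) * (Wc a * Wc b)
        = -(toC (vz b) * toC (vw a) - toC (vz a) * toC (vw b))
    rw [show toC (vz b) = Zc b from rfl, show toC (vz a) = Zc a from rfl,
        show toC (vw a) = Wc a from rfl, show toC (vw b) = Wc b from rfl]
    field_simp
    ring
  have hns := congrArg Complex.normSq hmul
  rw [Complex.normSq_mul, Complex.normSq_mul, Complex.normSq_neg, normSq_toC,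
    normSq_Wc, normSq_Wc] at hns
  have hd : ((enorm (det b a) : ℤ) : ℝ) = ((N (b - a) : ℤ) : ℝ) := by
    rw [enorm_det' a b hab.le]
  rw [hd] at hns
  have hPa := N_posR ha
  have hPb := N_posR hb
  rw [eq_div_iff (ne_of_gt (mul_pos hPa hPb))]
  linarith [hns]

lemma rad_prod (a b : ℕ) (ha : 1 ≤ a) (hb : 1 ≤ b) :
    4 * rad a * rad b = 1 / ((N a : ℝ) * (N b : ℝ)) := by
  have hPa := N_posR ha
  have hPb := N_posR hb
  rw [rad, rad]
  field_simp
  ring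

/-! Counting. -/

lemma inner_count (n j : ℕ) (hj : j < n) :
    ((Finset.range n).filter (fun i => i < j ∧ j ≤ i + 3)).card = min j 3 := by
  have h : (Finset.range n).filter (fun i => i < j ∧ j ≤ i + 3) = Finset.Ico (j - 3) j := by
    ext i
    simp only [Finset.mem_filter, Finset.mem_range, Finset.mem_Ico]
    omega
  rw [h, Nat.card_Ico]
  omega

lemma sum_min (n : ℕ) (hn : 3 ≤ n) : ∑ j ∈ Finset.range n, min j 3 = 3 * n - 6 := by
  induction n with
  | zero => omega
  | succ n ih =>
      rcases Nat.lt_or_ge n 3 with h | h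
      · interval_cases n
        · omega
        · omega
        · decide
      · rw [Finset.sum_range_succ, ih h]
        have : min n 3 = 3 := by omega
        omega

lemma nat_count (n : ℕ) (hn : 3 ≤ n) :
    ((Finset.range n ×ˢ Finset.range n).filter
      (fun q : ℕ × ℕ => q.1 < q.2 ∧ q.2 ≤ q.1 + 3)).card = 3 * n - 6 := by
  rw [Finset.card_eq_sum_card_fiberwise (f := fun q : ℕ × ℕ => q.2) (t := Finset.range n)
    (by intro x hx; simp only [Finset.mem_coe, Finset.mem_filter, Finset.mem_product] at hx; exact hx.1.2)]
  rw [← sum_min n hn]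
  apply Finset.sum_congr rfl
  intro j hj
  rw [← inner_count n j (Finset.mem_range.mp hj)]
  refine Finset.card_bij' (fun q _ => q.1) (fun i _ => (i, j)) ?_ ?_ ?_ ?_
  · intro a ha
    simp only [Finset.mem_filter, Finset.mem_product, Finset.mem_range] at ha ⊢
    omega
  · intro i hi
    simp only [Finset.mem_filter, Finset.mem_product, Finset.mem_range] at hi ⊢
    have := Finset.mem_range.mp hj
    exact ⟨by omega, trivial⟩
  · intro a ha
    simp only [Finset.mem_filter] at ha
    exact Prod.ext rfl ha.2.symm
  · intro i _
    rfl

lemma fin_count (n : ℕ) (hn : 3 ≤ n) :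
    ((Finset.univ : Finset (Fin n × Fin n)).filter
      (fun q => q.1 < q.2 ∧ (q.2 : ℕ) ≤ (q.1 : ℕ) + 3)).card = 3 * n - 6 := by
  rw [← nat_count n hn]
  refine Finset.card_bij' (fun (q : Fin n × Fin n) _ => ((q.1 : ℕ), (q.2 : ℕ)))
    (fun q hq => ((⟨q.1, ?_⟩ : Fin n), (⟨q.2, ?_⟩ : Fin n))) ?_ ?_ ?_ ?_
  · simp only [Finset.mem_filter, Finset.mem_product, Finset.mem_range] at hq
    exact hq.1.1
  · simp only [Finset.mem_filter, Finset.mem_product, Finset.mem_range] at hq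
    exact hq.1.2
  · intro a ha
    simp only [Finset.mem_filter, Finset.mem_univ, true_and] at ha
    simp only [Finset.mem_filter, Finset.mem_product, Finset.mem_range]
    exact ⟨⟨a.1.isLt, a.2.isLt⟩, Fin.lt_iff_val_lt_val.mp ha.1, ha.2⟩
  · intro q hq
    simp only [Finset.mem_filter, Finset.mem_product, Finset.mem_range] at hq
    simp only [Finset.mem_filter, Finset.mem_univ, true_and]
    exact ⟨Fin.lt_iff_val_lt_val.mpr hq.2.1, hq.2.2⟩
  · intro a _
    rfl
  · intro q _
    rfl

end ApolloPack

open ApolloPack in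
/-- For every `n ≥ 3` there exists a packing of `n` horospheres with
`3n - 6` tangencies (the Apollonian construction of Pacard and Pimentel). -/
theorem exists_apollonian_horosphere_packing (n : ℕ) (hn : 3 ≤ n) :
    ∃ (p : Fin n → EuclideanSpace ℝ (Fin 2)) (R : Fin n → ℝ),
      (∀ i, 0 < R i) ∧
      Function.Injective (fun i => (p i, R i)) ∧
      (∀ i j, i ≠ j → 4 * R i * R j ≤ ‖p i - p j‖ ^ 2) ∧
      Set.ncard {q : Fin n × Fin n | q.1 < q.2 ∧
        ‖p q.1 - p q.2‖ ^ 2 = 4 * R q.1 * R q.2} = 3 * n - 6 := by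
  classical
  set F := Complex.orthonormalBasisOneI.repr with hF
  set p : Fin n → EuclideanSpace ℝ (Fin 2) := fun i => F (pt ((i : ℕ) + 1)) with hp
  set R : Fin n → ℝ := fun i => rad ((i : ℕ) + 1) with hR
  have hnormF : ∀ x y : ℂ, ‖F x - F y‖ ^ 2 = Complex.normSq (x - y) := by
    intro x y
    rw [← map_sub, LinearIsometryEquiv.norm_map, ← Complex.sq_norm]
  have hone : ∀ i : Fin n, 1 ≤ (i : ℕ) + 1 := fun i => by omega
  -- main computation for i < j
  have hmain : ∀ i j : Fin n, i < j →
      ‖p i - p j‖ ^ 2 = (N ((j : ℕ) - (i : ℕ)) : ℝ) /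
        ((N ((i : ℕ) + 1) : ℝ) * (N ((j : ℕ) + 1) : ℝ)) := by
    intro i j hij
    have hij' : (i : ℕ) < (j : ℕ) := Fin.lt_iff_val_lt_val.mp hij
    have h := key ((i : ℕ) + 1) ((j : ℕ) + 1) (hone i) (by omega)
    have hd : ((j : ℕ) + 1) - ((i : ℕ) + 1) = (j : ℕ) - (i : ℕ) := by omega
    rw [hd] at h
    rw [hp, hnormF, h]
  have h4R : ∀ i j : Fin n, 4 * R i * R j =
      1 / ((N ((i : ℕ) + 1) : ℝ) * (N ((j : ℕ) + 1) : ℝ)) := by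
    intro i j
    exact rad_prod _ _ (hone i) (hone j)
  -- the tangency criterion
  have hiff : ∀ i j : Fin n, i < j →
      (‖p i - p j‖ ^ 2 = 4 * R i * R j ↔ (j : ℕ) ≤ (i : ℕ) + 3) := by
    intro i j hij
    have hij' : (i : ℕ) < (j : ℕ) := Fin.lt_iff_val_lt_val.mp hij
    have hPa := N_posR (k := (i : ℕ) + 1) (by omega)
    have hPb := N_posR (k := (j : ℕ) + 1) (by omega)
    have hX : ((N ((i : ℕ) + 1) : ℝ) * (N ((j : ℕ) + 1) : ℝ)) ≠ 0 :=
      ne_of_gt (mul_pos hPa hPb)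
    rw [hmain i j hij, h4R i j, div_eq_div_iff hX hX]
    constructor
    · intro h
      have hN1 : N ((j : ℕ) - (i : ℕ)) = 1 := by
        have : (N ((j : ℕ) - (i : ℕ)) : ℝ) = 1 := by
          field_simp at h
          exact_mod_cast h
        exact_mod_cast this
      by_contra hc
      have h4 : 4 ≤ (j : ℕ) - (i : ℕ) := by omega
      have := N_ge_two h4
      omega
    · intro h
      have hN1 : N ((j : ℕ) - (i : ℕ)) = 1 := N_eq_one (by omega) (by omega)
      rw [hN1]
      norm_num
  refine ⟨p, R, ?_, ?_, ?_, ?_⟩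
  · intro i
    exact rad_pos (hone i)
  · -- injectivity
    have hpne : ∀ i j : Fin n, i < j → p i ≠ p j := by
      intro i j hij heq
      have h0 : ‖p i - p j‖ ^ 2 = 0 := by rw [heq]; simp
      rw [hmain i j hij] at h0
      have hij' : (i : ℕ) < (j : ℕ) := Fin.lt_iff_val_lt_val.mp hij
      have hPa := N_posR (k := (i : ℕ) + 1) (by omega)
      have hPb := N_posR (k := (j : ℕ) + 1) (by omega)
      have hNd : (1 : ℝ) ≤ (N ((j : ℕ) - (i : ℕ)) : ℝ) := by
        exact_mod_cast N_ge_one (j := (j : ℕ) - (i : ℕ)) (by omega)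
      have : (N ((j : ℕ) - (i : ℕ)) : ℝ) = 0 := by
        field_simp at h0
        simpa using h0
      linarith
    intro i j hij
    simp only [Prod.mk.injEq] at hij
    by_contra hne
    rcases lt_or_gt_of_ne hne with h | h
    · exact hpne i j h hij.1
    · exact hpne j i h hij.1.symm
  · -- packing inequality
    have H : ∀ i j : Fin n, i < j → 4 * R i * R j ≤ ‖p i - p j‖ ^ 2 := by
      intro i j hij
      have hij' : (i : ℕ) < (j : ℕ) := Fin.lt_iff_val_lt_val.mp hij
      have hPa := N_posR (k := (i : ℕ) + 1) (by omega)
      have hPb := N_posR (k := (j : ℕ) + 1) (by omega)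
      have hNd : (1 : ℝ) ≤ (N ((j : ℕ) - (i : ℕ)) : ℝ) := by
        exact_mod_cast N_ge_one (j := (j : ℕ) - (i : ℕ)) (by omega)
      rw [hmain i j hij, h4R i j]
      exact div_le_div_of_nonneg_right hNd (mul_pos hPa hPb).le
    intro i j hij
    rcases lt_or_gt_of_ne hij with h | h
    · exact H i j h
    · have := H j i h
      calc 4 * R i * R j = 4 * R j * R i := by ring
        _ ≤ ‖p j - p i‖ ^ 2 := this
        _ = ‖p i - p j‖ ^ 2 := by rw [norm_sub_rev]
  · -- counting
    have hset : {q : Fin n × Fin n | q.1 < q.2 ∧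
        ‖p q.1 - p q.2‖ ^ 2 = 4 * R q.1 * R q.2} =
        ↑((Finset.univ : Finset (Fin n × Fin n)).filter
          (fun q => q.1 < q.2 ∧ (q.2 : ℕ) ≤ (q.1 : ℕ) + 3)) := by
      ext q
      simp only [Set.mem_setOf_eq, Finset.coe_filter, Finset.mem_univ, true_and]
      constructor
      · rintro ⟨hlt, heq⟩
        exact ⟨hlt, (hiff q.1 q.2 hlt).mp heq⟩
      · rintro ⟨hlt, hle⟩
        exact ⟨hlt, (hiff q.1 q.2 hlt).mpr hle⟩
    rw [hset, Set.ncard_coe_finset, fin_count n hn]
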